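/- arXiv:2305.18301 — 3 statements merged into one kernel-verified Lean document; each statement's English description precedes it below -/
import Mathlib

section
/- Let n = m + k, let L(q₁, …, qₙ, v₁, …, vₙ, t) be differentiable in the velocity variables v, and let α_ν(q₁, …, qₙ, u₁, …, u_m, t), ν = 1, …, k, be differentiable in u. Define the restricted Lagrangian L*(q, u, t) := L(q, (u₁, …, u_m, α₁(q,u,t), …, α_k(q,u,t)), t), the energy E(q, v, t) := Σ_{i=1}^n v_i ∂L/∂v_i − L, and the restricted energy E*(q, u, t) := Σ_{r=1}^m u_r ∂L*/∂u_r − L*. Then for all (q, u, t): E*(q, u, t) = E(q, (u, α(q,u,t)), t) + Σ_{ν=1}^k (ᾱ_ν − α_ν) ∂L/∂v_{m+ν}(q, (u, α(q,u,t)), t), where ᾱ_ν := Σ_{r=1}^m (∂α_ν/∂u_r) u_r. -/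
open scoped BigOperators

/-- With `n = m + k` and the velocity space `ℝ^n` identified with `ℝ^m × ℝ^k`
(`v = (u, w)`, `w_ν = v_{m+ν}`), let `L (q, v, t)` be differentiable in `v` and let the
constraints be given explicitly by `v_{m+ν} = α_ν (q, u, t)` with `α_ν` differentiable in
`u`.  With the restricted Lagrangian `L* (q, u, t) = L (q, (u, α(q,u,t)), t)`, the energy
`E = ∑ᵢ vᵢ ∂L/∂vᵢ − L` and the restricted energy `E* = ∑_r u_r ∂L*/∂u_r − L*`, one has
`E* = E + ∑_ν (ᾱ_ν − α_ν) ∂L/∂v_{m+ν}` evaluated on the constraint, where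
`ᾱ_ν = ∑_r (∂α_ν/∂u_r) u_r`. -/
theorem restricted_energy_eq_energy_add_correction
    {n m k : ℕ} (hn : n = m + k)
    (L : (Fin n → ℝ) → ((Fin m → ℝ) × (Fin k → ℝ)) → ℝ → ℝ)
    (α : Fin k → (Fin n → ℝ) → (Fin m → ℝ) → ℝ → ℝ)
    (hL : ∀ q t, Differentiable ℝ (fun v => L q v t))
    (hα : ∀ ν q t, Differentiable ℝ (fun u => α ν q u t)) :
    ∀ (q : Fin n → ℝ) (u : Fin m → ℝ) (t : ℝ),
      -- E*
      (∑ r, u r *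
          fderiv ℝ (fun u' => L q (u', fun ν => α ν q u' t) t) u (Pi.single r 1))
        - L q (u, fun ν => α ν q u t) t
      =
      -- E evaluated at v = (u, α (q, u, t))
      ((∑ i, u i *
            fderiv ℝ (fun v => L q v t) (u, fun ν => α ν q u t) (Pi.single i 1, 0))
        + (∑ ν, α ν q u t *
            fderiv ℝ (fun v => L q v t) (u, fun ν' => α ν' q u t) (0, Pi.single ν 1))
        - L q (u, fun ν => α ν q u t) t)
      -- + ∑_ν (ᾱ_ν − α_ν) ∂L/∂v_{m+ν}
      + ∑ ν, ((∑ r, fderiv ℝ (fun u' => α ν q u' t) u (Pi.single r 1) * u r)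
              - α ν q u t)
            * fderiv ℝ (fun v => L q v t) (u, fun ν' => α ν' q u t) (0, Pi.single ν 1) := by
  intro q u t
  set w : Fin k → ℝ := fun ν => α ν q u t with hw
  set DL := fderiv ℝ (fun v => L q v t) (u, w) with hDL
  set Dα : Fin k → (Fin m → ℝ) →L[ℝ] ℝ := fun ν => fderiv ℝ (fun u' => α ν q u' t) u with hDα
  have key : ∀ x : Fin m → ℝ,
      fderiv ℝ (fun u' => L q (u', fun ν => α ν q u' t) t) u x
        = DL (x, 0) + ∑ ν, (Dα ν x) * DL (0, Pi.single ν 1) := by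
    intro x
    have hg : HasFDerivAt (fun u' : Fin m → ℝ => (u', fun ν => α ν q u' t))
        ((ContinuousLinearMap.id ℝ (Fin m → ℝ)).prod (ContinuousLinearMap.pi Dα)) u := by
      exact HasFDerivAt.prodMk (hasFDerivAt_id u) (hasFDerivAt_pi.2 fun ν => (hα ν q t u).hasFDerivAt)
    have hcomp : HasFDerivAt (fun u' => L q (u', fun ν => α ν q u' t) t)
        ((fderiv ℝ (fun v => L q v t) (u, w)).comp
          ((ContinuousLinearMap.id ℝ (Fin m → ℝ)).prod (ContinuousLinearMap.pi Dα))) u :=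
      by have := ((hL q t (u, w)).hasFDerivAt).comp u hg; exact this
    rw [hcomp.fderiv]
    have hsplit : ((x, fun ν => Dα ν x) : (Fin m → ℝ) × (Fin k → ℝ))
        = (x, 0) + (0, fun ν => Dα ν x) := by simp
    simp only [ContinuousLinearMap.comp_apply, ContinuousLinearMap.prod_apply,
      ContinuousLinearMap.id_apply, ContinuousLinearMap.pi_apply]
    have hpi : (ContinuousLinearMap.pi Dα) x = fun ν => Dα ν x := rfl
    rw [hpi, hsplit, map_add]
    congr 1
    have hy : (fun ν => Dα ν x) = ∑ ν, (Dα ν x) • (Pi.single ν 1 : Fin k → ℝ) := by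
      ext j
      simp [Finset.sum_apply, Pi.single_apply]
    have : ((0, fun ν => Dα ν x) : (Fin m → ℝ) × (Fin k → ℝ))
        = ∑ ν, (Dα ν x) • ((0, Pi.single ν 1) : (Fin m → ℝ) × (Fin k → ℝ)) := by
      rw [Prod.ext_iff]
      constructor
      · simp [Prod.fst_sum]
      · simp only [Prod.snd_sum]
        simpa using hy
    rw [this, map_sum]
    refine Finset.sum_congr rfl fun ν _ => ?_
    rw [map_smul, smul_eq_mul]
  simp only [key]
  simp only [mul_add, Finset.sum_add_distrib, Finset.mul_sum, sub_mul, Finset.sum_sub_distrib]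
  have swap : (∑ x : Fin m, ∑ i : Fin k, u x * ((Dα i) (Pi.single x 1) * DL (0, Pi.single i 1)))
      = ∑ i : Fin k, ∑ x : Fin m, u x * ((Dα i) (Pi.single x 1) * DL (0, Pi.single i 1)) :=
    Finset.sum_comm
  rw [swap]
  simp only [Finset.sum_mul]
  ring_nf
  congr 1
  rw [add_sub_right_comm]
  congr 1
  refine Finset.sum_congr rfl fun i _ => Finset.sum_congr rfl fun x _ => by simp only [hDα]; ring
end

section
/- Let n = m + k, let L(q, v, t) be differentiable in v, and let α_ν(q, u, t), ν = 1, …, k, be differentiable in u and satisfy ᾱ_ν = α_ν identically, where ᾱ_ν := Σ_{r=1}^m (∂α_ν/∂u_r) u_r. Then the restricted energy coincides with the full energy evaluated on the constraint: E*(q, u, t) = E(q, (u, α(q,u,t)), t) for all (q, u, t), where L*(q,u,t) := L(q, (u, α(q,u,t)), t), E := Σ_{i=1}^n v_i ∂L/∂v_i − L and E* := Σ_{r=1}^m u_r ∂L*/∂u_r − L*. -/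
open scoped BigOperators

/-- With `n = m + k` and the velocity space `ℝ^n` identified with `ℝ^m × ℝ^k`, let
`L (q, v, t)` be differentiable in `v` and `α_ν (q, u, t)` be differentiable in `u` and
satisfy `ᾱ_ν = α_ν` identically, where `ᾱ_ν = ∑_r (∂α_ν/∂u_r) u_r`.  Then the restricted
energy `E* = ∑_r u_r ∂L*/∂u_r − L*` (with `L* (q,u,t) = L (q, (u, α(q,u,t)), t)`)
coincides with the full energy `E = ∑ᵢ vᵢ ∂L/∂vᵢ − L` evaluated on the constraint. -/
theorem restricted_energy_eq_energy_of_abar_eq_alpha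
    {n m k : ℕ} (hn : n = m + k)
    (L : (Fin n → ℝ) → ((Fin m → ℝ) × (Fin k → ℝ)) → ℝ → ℝ)
    (α : Fin k → (Fin n → ℝ) → (Fin m → ℝ) → ℝ → ℝ)
    (hL : ∀ q t, Differentiable ℝ (fun v => L q v t))
    (hα : ∀ ν q t, Differentiable ℝ (fun u => α ν q u t))
    (hbar : ∀ ν (q : Fin n → ℝ) (u : Fin m → ℝ) (t : ℝ),
        ∑ r, fderiv ℝ (fun u' => α ν q u' t) u (Pi.single r 1) * u r = α ν q u t) :
    ∀ (q : Fin n → ℝ) (u : Fin m → ℝ) (t : ℝ),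
      -- E*
      (∑ r, u r *
          fderiv ℝ (fun u' => L q (u', fun ν => α ν q u' t) t) u (Pi.single r 1))
        - L q (u, fun ν => α ν q u t) t
      =
      -- E evaluated at v = (u, α (q, u, t))
      ((∑ i, u i *
            fderiv ℝ (fun v => L q v t) (u, fun ν => α ν q u t) (Pi.single i 1, 0))
        + (∑ ν, α ν q u t *
            fderiv ℝ (fun v => L q v t) (u, fun ν' => α ν' q u t) (0, Pi.single ν 1))
        - L q (u, fun ν => α ν q u t) t) := by
  intro q u t
  set p : (Fin m → ℝ) × (Fin k → ℝ) := (u, fun ν => α ν q u t) with hp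
  set D := fderiv ℝ (fun v => L q v t) p with hD
  have hF : HasFDerivAt (fun u' => ((u', fun ν => α ν q u' t) : (Fin m → ℝ) × (Fin k → ℝ)))
      ((ContinuousLinearMap.id ℝ (Fin m → ℝ)).prod
        (ContinuousLinearMap.pi fun ν => fderiv ℝ (fun u' => α ν q u' t) u)) u := by
    exact HasFDerivAt.prodMk (hasFDerivAt_id u)
      (hasFDerivAt_pi.2 fun ν => ((hα ν q t) u).hasFDerivAt)
  have hLc : HasFDerivAt (fun u' => L q (u', fun ν => α ν q u' t) t)
      (D.comp ((ContinuousLinearMap.id ℝ (Fin m → ℝ)).prod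
        (ContinuousLinearMap.pi fun ν => fderiv ℝ (fun u' => α ν q u' t) u))) u :=
    HasFDerivAt.comp (g := fun v => L q v t) u (((hL q t) p).hasFDerivAt) hF
  have hsing : ∀ ν : Fin k, (fun j => if ν = j then (1:ℝ) else 0) = Pi.single ν 1 := by
    intro ν; ext j; simp [Pi.single_apply, eq_comm]
  have hw : ∀ w : Fin k → ℝ, D (0, w) = ∑ ν, w ν * D (0, Pi.single ν 1) := by
    intro w
    have h := LinearMap.pi_apply_eq_sum_univ
      (((D.comp (ContinuousLinearMap.inr ℝ (Fin m → ℝ) (Fin k → ℝ)))) :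
        (Fin k → ℝ) →ₗ[ℝ] ℝ) w
    simp only [ContinuousLinearMap.coe_coe, ContinuousLinearMap.comp_apply,
      ContinuousLinearMap.inr_apply, smul_eq_mul] at h
    rw [h]
    exact Finset.sum_congr rfl fun ν _ => by rw [hsing ν]
  have hkey : ∀ r, fderiv ℝ (fun u' => L q (u', fun ν => α ν q u' t) t) u (Pi.single r 1)
      = D (Pi.single r 1, 0)
        + ∑ ν, fderiv ℝ (fun u' => α ν q u' t) u (Pi.single r 1) * D (0, Pi.single ν 1) := by
    intro r
    rw [hLc.fderiv]
    simp only [ContinuousLinearMap.comp_apply, ContinuousLinearMap.prod_apply,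
      ContinuousLinearMap.coe_id', id_eq]
    have hpi : (ContinuousLinearMap.pi fun ν => fderiv ℝ (fun u' => α ν q u' t) u)
        (Pi.single r 1) = fun ν => fderiv ℝ (fun u' => α ν q u' t) u (Pi.single r 1) := rfl
    rw [hpi]
    have hsplit : ((Pi.single r 1,
        fun ν => fderiv ℝ (fun u' => α ν q u' t) u (Pi.single r 1)) :
          (Fin m → ℝ) × (Fin k → ℝ))
        = (Pi.single r 1, 0)
          + (0, fun ν => fderiv ℝ (fun u' => α ν q u' t) u (Pi.single r 1)) := by
      simp [Prod.mk_add_mk]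
    rw [hsplit, map_add, hw]
  simp only [hkey, mul_add, Finset.sum_add_distrib, Finset.mul_sum]
  congr 1
  congr 1
  rw [Finset.sum_comm]
  refine Finset.sum_congr rfl fun ν _ => ?_
  rw [← hbar ν q u t, Finset.sum_mul]
  exact Finset.sum_congr rfl fun r _ => by ring
end

section
/- Let n = m + k, let L(q, v) be a C² time-independent Lagrangian (∂L/∂t = 0), and let α_ν(q, u, t), ν = 1, …, k, be C¹ functions (possibly time-dependent) satisfying ᾱ_ν = α_ν identically, where ᾱ_ν := Σ_{r=1}^m (∂α_ν/∂u_r) u_r. Let q : I → ℝ^n be a C² curve satisfying the constraints q̇_{m+ν}(t) = α_ν(q(t), u(t), t) with u(t) = (q̇₁(t), …, q̇_m(t)) and the Četaev equations of motion R_r(t) + Σ_{ν=1}^k (∂α_ν/∂u_r) R_{m+ν}(t) = 0 for r = 1, …, m, where R_j(t) := d/dt[∂L/∂v_j(q(t), q̇(t))] − ∂L/∂q_j(q(t), q̇(t)). Then the energy E(q, v) := Σ_{i=1}^n v_i ∂L/∂v_i − L is a first integral: t ↦ E(q(t), q̇(t)) is constant on I. In particular the energy can be conserved even when the constraints depend explicitly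 on time. -/
open scoped BigOperators

/-! With `n = m + k`, configurations and velocities are identified with pairs
`(first m components, last k components)`: for `x : (Fin m → ℝ) × (Fin k → ℝ)`,
`x.1 r` is the component `x_r` (`r = 1, …, m`) and `x.2 ν` is `x_{m+ν}` (`ν = 1, …, k`).
The Lagrangian here is time-independent: `L = L (q, v)`. -/

/-- Argument `(q, v)` of a time-independent Lagrangian. -/
abbrev LagArg (m k : ℕ) :=
  ((Fin m → ℝ) × (Fin k → ℝ)) × ((Fin m → ℝ) × (Fin k → ℝ))

/-- Reduced argument `(q, u, t)` of the (possibly time-dependent) constraint functions. -/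
abbrev RedArg (m k : ℕ) := ((Fin m → ℝ) × (Fin k → ℝ)) × (Fin m → ℝ) × ℝ

/-- `∂L/∂q_r`, `r = 1, …, m`. -/
noncomputable def dLdq1 {m k : ℕ} (L : LagArg m k → ℝ) (p : LagArg m k) (r : Fin m) : ℝ :=
  fderiv ℝ L p ((Pi.single r 1, 0), 0)

/-- `∂L/∂q_{m+ν}`, `ν = 1, …, k`. -/
noncomputable def dLdq2 {m k : ℕ} (L : LagArg m k → ℝ) (p : LagArg m k) (ν : Fin k) : ℝ :=
  fderiv ℝ L p ((0, Pi.single ν 1), 0)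

/-- `∂L/∂v_r`, `r = 1, …, m`. -/
noncomputable def dLdv1 {m k : ℕ} (L : LagArg m k → ℝ) (p : LagArg m k) (r : Fin m) : ℝ :=
  fderiv ℝ L p (0, (Pi.single r 1, 0))

/-- `∂L/∂v_{m+ν}`, `ν = 1, …, k`. -/
noncomputable def dLdv2 {m k : ℕ} (L : LagArg m k → ℝ) (p : LagArg m k) (ν : Fin k) : ℝ :=
  fderiv ℝ L p (0, (0, Pi.single ν 1))

/-- `∂α_ν/∂u_r`. -/
noncomputable def dαdu {m k : ℕ} (α : Fin k → RedArg m k → ℝ) (ν : Fin k)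
    (p : RedArg m k) (r : Fin m) : ℝ :=
  fderiv ℝ (α ν) p (0, Pi.single r 1, 0)

/-- The energy `E (q, v) = ∑ᵢ vᵢ ∂L/∂vᵢ − L`. -/
noncomputable def energy {m k : ℕ} (L : LagArg m k → ℝ) (p : LagArg m k) : ℝ :=
  (∑ r, p.2.1 r * dLdv1 L p r) + (∑ ν, p.2.2 ν * dLdv2 L p ν) - L p

/-- The reduced argument `(q(t), u(t), t)` along a curve, `u(t) = (q̇₁, …, q̇_m)(t)`. -/
noncomputable def redPt {m k : ℕ} (c : ℝ → (Fin m → ℝ) × (Fin k → ℝ)) (t : ℝ) :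
    RedArg m k :=
  (c t, (deriv c t).1, t)

/-- Euler–Lagrange residual `R_r = d/dt ∂L/∂v_r − ∂L/∂q_r`, `r = 1, …, m`, along a curve. -/
noncomputable def Rfst {m k : ℕ} (L : LagArg m k → ℝ)
    (c : ℝ → (Fin m → ℝ) × (Fin k → ℝ)) (r : Fin m) (t : ℝ) : ℝ :=
  deriv (fun s => dLdv1 L (c s, deriv c s) r) t - dLdq1 L (c t, deriv c t) r

/-- Euler–Lagrange residual `R_{m+ν} = d/dt ∂L/∂v_{m+ν} − ∂L/∂q_{m+ν}` along a curve. -/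
noncomputable def Rsnd {m k : ℕ} (L : LagArg m k → ℝ)
    (c : ℝ → (Fin m → ℝ) × (Fin k → ℝ)) (ν : Fin k) (t : ℝ) : ℝ :=
  deriv (fun s => dLdv2 L (c s, deriv c s) ν) t - dLdq2 L (c t, deriv c t) ν

section Aux

lemma pi_clm_decomp {n : ℕ} (T : (Fin n → ℝ) →L[ℝ] ℝ) (w : Fin n → ℝ) :
    T w = ∑ i, w i * T (Pi.single i 1) := by
  have hw : w = ∑ i, w i • (Pi.single i 1 : Fin n → ℝ) := by
    ext j
    simp [Finset.sum_apply, Pi.single_apply]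
  conv_lhs => rw [hw]
  rw [map_sum]
  simp [smul_eq_mul]

lemma clm_decomp {m k : ℕ} (T : LagArg m k →L[ℝ] ℝ) (z : LagArg m k) :
    T z = ((∑ r, z.1.1 r * T ((Pi.single r 1, 0), 0))
      + (∑ ν, z.1.2 ν * T ((0, Pi.single ν 1), 0)))
      + ((∑ r, z.2.1 r * T (0, (Pi.single r 1, 0)))
      + (∑ ν, z.2.2 ν * T (0, (0, Pi.single ν 1)))) := by
  have hz : z = (((z.1.1, 0), 0) : LagArg m k) + ((0, z.1.2), 0)
      + ((0, (z.2.1, 0)) + (0, (0, z.2.2))) := by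
    simp [Prod.ext_iff]
  have e11 : ∀ w : Fin m → ℝ, T ((w, 0), 0) = ∑ r, w r * T ((Pi.single r 1, 0), 0) := by
    intro w
    have := pi_clm_decomp (T.comp ((ContinuousLinearMap.inl ℝ _ _).comp
      (ContinuousLinearMap.inl ℝ (Fin m → ℝ) (Fin k → ℝ)))) w
    simpa using this
  have e12 : ∀ w : Fin k → ℝ, T ((0, w), 0) = ∑ ν, w ν * T ((0, Pi.single ν 1), 0) := by
    intro w
    have := pi_clm_decomp (T.comp ((ContinuousLinearMap.inl ℝ _ _).comp
      (ContinuousLinearMap.inr ℝ (Fin m → ℝ) (Fin k → ℝ)))) w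
    simpa using this
  have e21 : ∀ w : Fin m → ℝ, T (0, (w, 0)) = ∑ r, w r * T (0, (Pi.single r 1, 0)) := by
    intro w
    have := pi_clm_decomp (T.comp ((ContinuousLinearMap.inr ℝ _ _).comp
      (ContinuousLinearMap.inl ℝ (Fin m → ℝ) (Fin k → ℝ)))) w
    simpa using this
  have e22 : ∀ w : Fin k → ℝ, T (0, (0, w)) = ∑ ν, w ν * T (0, (0, Pi.single ν 1)) := by
    intro w
    have := pi_clm_decomp (T.comp ((ContinuousLinearMap.inr ℝ _ _).comp
      (ContinuousLinearMap.inr ℝ (Fin m → ℝ) (Fin k → ℝ)))) w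
    simpa using this
  conv_lhs => rw [hz]
  rw [map_add, map_add, map_add, e11, e12, e21, e22]

/-- `fderiv` of the Lagrangian along the lifted curve. -/
noncomputable def Dcurve {m k : ℕ} (L : LagArg m k → ℝ)
    (c : ℝ → (Fin m → ℝ) × (Fin k → ℝ)) (s : ℝ) : LagArg m k →L[ℝ] ℝ :=
  fderiv ℝ L (c s, deriv c s)

end Aux

/-- Energy conservation for homogeneous nonholonomic constraints.  Let `L (q, v)` be a
`C²` time-independent Lagrangian and let the (possibly time-dependent) constraint
functions `α_ν (q, u, t)` be `C¹` and satisfy `ᾱ_ν = α_ν` identically, where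
`ᾱ_ν = ∑_r (∂α_ν/∂u_r) u_r`.  If a `C²` curve satisfies the constraints
`q̇_{m+ν} = α_ν (q, q̇₁, …, q̇_m, t)` on the open interval `I` together with the Четаев
equations of motion `R_r + ∑_ν (∂α_ν/∂u_r) R_{m+ν} = 0`, then the energy
`E = ∑ᵢ vᵢ ∂L/∂vᵢ − L` is a first integral: `t ↦ E (q(t), q̇(t))` is constant on `I`.
In particular the energy can be conserved even for rheonomic constraints. -/

theorem energy_first_integral_of_homogeneous_constraints
    {m k : ℕ}
    (L : LagArg m k → ℝ) (hL : ContDiff ℝ 2 L)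
    (α : Fin k → RedArg m k → ℝ) (hα : ∀ ν, ContDiff ℝ 1 (α ν))
    (hbar : ∀ ν : Fin k, ∀ p : RedArg m k, ∑ r, dαdu α ν p r * p.2.1 r = α ν p)
    {I : Set ℝ} (hIopen : IsOpen I) (hIconn : IsPreconnected I)
    (c : ℝ → (Fin m → ℝ) × (Fin k → ℝ)) (hc : ContDiff ℝ 2 c)
    (hconstr : ∀ t ∈ I, ∀ ν : Fin k, (deriv c t).2 ν = α ν (redPt c t))
    (hCet : ∀ t ∈ I, ∀ r : Fin m,
      Rfst L c r t + ∑ ν, dαdu α ν (redPt c t) r * Rsnd L c ν t = 0) :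
    ∀ t₁ ∈ I, ∀ t₂ ∈ I,
      energy L (c t₁, deriv c t₁) = energy L (c t₂, deriv c t₂) := by
  have h12 : (1 : WithTop ℕ∞) ≤ 2 := one_le_two
  have h2eq : (2 : WithTop ℕ∞) = 1 + 1 := by norm_num
  have hcd : Differentiable ℝ c := hc.differentiable (by norm_num)
  have hvC1 : ContDiff ℝ 1 (deriv c) :=
    (contDiff_succ_iff_deriv.mp (h2eq ▸ hc)).2.2
  have hDC1 : ContDiff ℝ 1 (Dcurve L c) := by
    have h1 : ContDiff ℝ 1 (fderiv ℝ L) :=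
      hL.fderiv_right (le_of_eq h2eq.symm)
    exact h1.comp ((hc.of_le h12 : ContDiff ℝ 1 c).prodMk hvC1)
  have hDdiff : Differentiable ℝ (Dcurve L c) := hDC1.differentiable (by norm_num)
  have key : ∀ t ∈ I, HasDerivAt (fun s => energy L (c s, deriv c s)) 0 t := by
    intro t ht
    set a := deriv (deriv c) t with ha
    set A := deriv (Dcurve L c) t with hA
    have hct : HasDerivAt c (deriv c t) t := (hcd t).hasDerivAt
    have hvt : HasDerivAt (deriv c) a t := ((hvC1.differentiable (by norm_num)) t).hasDerivAt
    have hDt : HasDerivAt (Dcurve L c) A t := (hDdiff t).hasDerivAt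
    have hDapp : ∀ w : LagArg m k, HasDerivAt (fun s => Dcurve L c s w) (A w) t := by
      intro w
      simpa using hDt.clm_apply (hasDerivAt_const t w)
    have hLt : HasFDerivAt L (Dcurve L c t) (c t, deriv c t) :=
      (hL.differentiable (by norm_num) (c t, deriv c t)).hasFDerivAt
    have hft : HasDerivAt (fun s => ((c s, deriv c s) : LagArg m k)) (deriv c t, a) t :=
      hct.prodMk hvt
    have hLcomp : HasDerivAt (fun s => L (c s, deriv c s)) (Dcurve L c t (deriv c t, a)) t :=
      hLt.comp_hasDerivAt t hft
    have hzero' : HasDerivAt (fun s => (((0 : (Fin m → ℝ) × (Fin k → ℝ)), deriv c s) : LagArg m k))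
        ((0 : (Fin m → ℝ) × (Fin k → ℝ)), a) t := (hasDerivAt_const t _).prodMk hvt
    have hsec : HasDerivAt (fun s => Dcurve L c s ((0 : (Fin m → ℝ) × (Fin k → ℝ)), deriv c s))
        (A (0, deriv c t) + Dcurve L c t (0, a)) t := hDt.clm_apply hzero'
    have henergy : (fun s => energy L (c s, deriv c s))
        = fun s => Dcurve L c s ((0 : (Fin m → ℝ) × (Fin k → ℝ)), deriv c s)
          - L (c s, deriv c s) := by
      funext s
      have h := clm_decomp (Dcurve L c s) (((0 : (Fin m → ℝ) × (Fin k → ℝ)), deriv c s))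
      simp only [energy]
      rw [h]
      simp only [Prod.fst_zero, Prod.snd_zero, Pi.zero_apply, zero_mul,
        Finset.sum_const_zero, zero_add, add_zero]
      rfl
    have hE : HasDerivAt (fun s => energy L (c s, deriv c s))
        (A (0, deriv c t) + Dcurve L c t (0, a) - Dcurve L c t (deriv c t, a)) t := by
      rw [henergy]; exact hsec.sub hLcomp
    have hRf : ∀ r : Fin m, Rfst L c r t
        = A (0, (Pi.single r 1, 0)) - Dcurve L c t ((Pi.single r 1, 0), 0) := by
      intro r
      have hd := (hDapp ((0 : (Fin m → ℝ) × (Fin k → ℝ)), (Pi.single r 1, 0))).deriv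
      have hr : Rfst L c r t
          = deriv (fun s => Dcurve L c s ((0 : (Fin m → ℝ) × (Fin k → ℝ)), (Pi.single r 1, 0))) t
            - Dcurve L c t ((Pi.single r 1, 0), 0) := rfl
      rw [hr, hd]
    have hRs : ∀ ν : Fin k, Rsnd L c ν t
        = A (0, (0, Pi.single ν 1)) - Dcurve L c t ((0, Pi.single ν 1), 0) := by
      intro ν
      have hd := (hDapp ((0 : (Fin m → ℝ) × (Fin k → ℝ)), (0, Pi.single ν 1))).deriv
      have hr : Rsnd L c ν t
          = deriv (fun s => Dcurve L c s ((0 : (Fin m → ℝ) × (Fin k → ℝ)), (0, Pi.single ν 1))) t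
            - Dcurve L c t ((0, Pi.single ν 1), 0) := rfl
      rw [hr, hd]
    have hval : A (0, deriv c t) + Dcurve L c t (0, a) - Dcurve L c t (deriv c t, a)
        = (∑ r, (deriv c t).1 r * Rfst L c r t) + ∑ ν, (deriv c t).2 ν * Rsnd L c ν t := by
      have hsplit : Dcurve L c t ((deriv c t, a) : LagArg m k)
          = Dcurve L c t (deriv c t, 0) + Dcurve L c t (0, a) := by
        rw [← map_add]
        congr 1
        simp
      rw [hsplit]
      have hA' := clm_decomp A (((0 : (Fin m → ℝ) × (Fin k → ℝ)), deriv c t))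
      have hD' := clm_decomp (Dcurve L c t) ((deriv c t, (0 : (Fin m → ℝ) × (Fin k → ℝ))))
      simp only [Prod.fst_zero, Prod.snd_zero, Pi.zero_apply, zero_mul,
        Finset.sum_const_zero, zero_add, add_zero] at hA' hD'
      rw [hA', hD']
      simp_rw [hRf, hRs, mul_sub]
      rw [Finset.sum_sub_distrib, Finset.sum_sub_distrib]
      ring
    have hzero : (∑ r, (deriv c t).1 r * Rfst L c r t) + ∑ ν, (deriv c t).2 ν * Rsnd L c ν t = 0 := by
      have hw : ∀ ν : Fin k, (deriv c t).2 ν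
          = ∑ r, dαdu α ν (redPt c t) r * (deriv c t).1 r := by
        intro ν
        rw [hconstr t ht ν, ← hbar ν (redPt c t)]
        rfl
      have h1 : ∑ ν, (deriv c t).2 ν * Rsnd L c ν t
          = ∑ r, (deriv c t).1 r * ∑ ν, dαdu α ν (redPt c t) r * Rsnd L c ν t := by
        calc ∑ ν, (deriv c t).2 ν * Rsnd L c ν t
            = ∑ ν, (∑ r, dαdu α ν (redPt c t) r * (deriv c t).1 r) * Rsnd L c ν t :=
              Finset.sum_congr rfl fun ν _ => by rw [hw ν]
          _ = ∑ r, (deriv c t).1 r * ∑ ν, dαdu α ν (redPt c t) r * Rsnd L c ν t := by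
              simp_rw [Finset.sum_mul, Finset.mul_sum]
              rw [Finset.sum_comm]
              exact Finset.sum_congr rfl fun r _ => Finset.sum_congr rfl fun ν _ => by ring
      rw [h1, ← Finset.sum_add_distrib]
      refine Finset.sum_eq_zero fun r _ => ?_
      rw [← mul_add, hCet t ht r, mul_zero]
    rw [hval, hzero] at hE
    exact hE
  intro t₁ ht₁ t₂ ht₂
  have hconv : Convex ℝ I := hIconn.ordConnected.convex
  refine hconv.is_const_of_fderivWithin_eq_zero (𝕜 := ℝ)
    (f := fun t => energy L (c t, deriv c t)) ?_ ?_ ht₁ ht₂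
  · exact fun t ht => ((key t ht).differentiableAt).differentiableWithinAt
  · intro t ht
    rw [fderivWithin_of_isOpen hIopen ht]
    have h0 : HasFDerivAt (fun t => energy L (c t, deriv c t)) (0 : ℝ →L[ℝ] ℝ) t := by
      have h1 := (key t ht).hasFDerivAt
      have h2 : (ContinuousLinearMap.toSpanSingleton ℝ (0:ℝ)) = 0 := by
        ext
        simp
      rwa [h2] at h1
    exact h0.fderiv
end
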